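/- Let y be any vector in R^d and define x = (1 + ‖y‖²)^{-1/2} y. Then the Jacobian determinant of the map y ↦ x equals (1 + ‖y‖²)^{-(d/2 + 1)}. -/

import Mathlib

open MeasureTheory Real Set Metric

open scoped RealInnerProductSpace

lemma det_aux (d : ℕ) (a : ℝ) (ha : a ≠ 0) (u w : EuclideanSpace ℝ (Fin d)) :
    LinearMap.det (a • (LinearMap.id : EuclideanSpace ℝ (Fin d) →ₗ[ℝ] _) +
      LinearMap.smulRight (innerSL ℝ u).toLinearMap w) =
    a ^ d * (1 + a⁻¹ * ⟪u, w⟫) := by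
  classical
  set b := EuclideanSpace.basisFun (Fin d) ℝ
  rw [← LinearMap.det_toMatrix b.toBasis]
  have hM : LinearMap.toMatrix b.toBasis b.toBasis
      (a • (LinearMap.id : EuclideanSpace ℝ (Fin d) →ₗ[ℝ] _) +
        LinearMap.smulRight (innerSL ℝ u).toLinearMap w) =
      a • (1 + Matrix.replicateCol Unit (a⁻¹ • (w : Fin d → ℝ)) * Matrix.replicateRow Unit (u : Fin d → ℝ)) := by
    ext i j
    simp [LinearMap.toMatrix_apply, b, Matrix.one_apply, Matrix.mul_apply,
      real_inner_comm, PiLp.inner_apply, RCLike.inner_apply, mul_add, Matrix.smul_apply]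
    field_simp
  rw [hM, Matrix.det_smul, Matrix.det_one_add_replicateCol_mul_replicateRow]
  simp [dotProduct, PiLp.inner_apply, RCLike.inner_apply, Finset.mul_sum, mul_add]
  exact Finset.sum_congr rfl fun i _ => by ring

theorem jacobian_space_to_ball (d : ℕ) (y : EuclideanSpace ℝ (Fin d)) :
    |(fderiv ℝ (fun z : EuclideanSpace ℝ (Fin d) =>
        ((1 + ‖z‖ ^ 2) ^ (-(1/2 : ℝ))) • z) y).det| =
      (1 + ‖y‖ ^ 2) ^ (-((d : ℝ) / 2 + 1)) := by
  set t : ℝ := 1 + ‖y‖ ^ 2 with ht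
  have ht0 : 0 < t := by positivity
  set a : ℝ := t ^ (-(1/2 : ℝ)) with ha
  have ha0 : 0 < a := Real.rpow_pos_of_pos ht0 _
  set c : ℝ := -(1/2) * t ^ (-(1/2 : ℝ) - 1) with hc
  have h1 : HasFDerivAt (fun z : EuclideanSpace ℝ (Fin d) => 1 + ‖z‖ ^ 2)
      (2 • innerSL ℝ y) y := by
    simpa using (hasFDerivAt_id y).norm_sq
  have h2 : HasFDerivAt (fun z : EuclideanSpace ℝ (Fin d) => (1 + ‖z‖ ^ 2) ^ (-(1/2 : ℝ)))
      (c • (2 • innerSL ℝ y)) y := by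
    have := (Real.hasDerivAt_rpow_const (x := t) (p := -(1/2 : ℝ)) (Or.inl ht0.ne')).comp_hasFDerivAt y h1
    exact this
  have h3 : HasFDerivAt (fun z : EuclideanSpace ℝ (Fin d) => ((1 + ‖z‖ ^ 2) ^ (-(1/2 : ℝ))) • z)
      (a • ContinuousLinearMap.id ℝ (EuclideanSpace ℝ (Fin d)) +
        (c • (2 • innerSL ℝ y)).smulRight y) y := h2.smul (hasFDerivAt_id y)
  rw [h3.fderiv]
  set w : EuclideanSpace ℝ (Fin d) := (2 * c) • y with hw
  have hcoe : ((a • ContinuousLinearMap.id ℝ (EuclideanSpace ℝ (Fin d)) +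
      (c • (2 • innerSL ℝ y)).smulRight y) : EuclideanSpace ℝ (Fin d) →ₗ[ℝ] _) =
      a • (LinearMap.id : EuclideanSpace ℝ (Fin d) →ₗ[ℝ] _) +
        LinearMap.smulRight (innerSL ℝ y).toLinearMap w := by
    refine LinearMap.ext fun v => ?_
    simp only [ContinuousLinearMap.coe_add, LinearMap.add_apply, ContinuousLinearMap.coe_coe,
      ContinuousLinearMap.add_apply, ContinuousLinearMap.smul_apply,
      ContinuousLinearMap.coe_smul, LinearMap.smul_apply, LinearMap.id_apply,
      ContinuousLinearMap.id_apply, ContinuousLinearMap.smulRight_apply,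
      LinearMap.smulRight_apply, hw, smul_smul, smul_eq_mul, nsmul_eq_mul, Nat.cast_ofNat]
    congr 1
    ring_nf
  have hdet : (a • ContinuousLinearMap.id ℝ (EuclideanSpace ℝ (Fin d)) +
      (c • (2 • innerSL ℝ y)).smulRight y).det = a ^ d * (1 + a⁻¹ * ⟪y, w⟫) := by
    rw [ContinuousLinearMap.det, hcoe, det_aux d a ha0.ne' y w]
  rw [hdet]
  have hiw : ⟪y, w⟫ = 2 * c * ‖y‖ ^ 2 := by
    rw [hw, real_inner_smul_right, real_inner_self_eq_norm_sq]
  have hainv : a⁻¹ = t ^ ((1 : ℝ)/2) := by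
    rw [ha, ← Real.rpow_neg ht0.le]; norm_num
  have hmid : 1 + a⁻¹ * ⟪y, w⟫ = t⁻¹ := by
    rw [hiw, hainv, hc]
    have : t ^ ((1 : ℝ)/2) * (2 * (-(1/2) * t ^ (-(1/2 : ℝ) - 1)) * ‖y‖ ^ 2) =
        -(t ^ (-1 : ℝ) * ‖y‖ ^ 2) := by
      rw [show t ^ ((1:ℝ)/2) * (2 * (-(1/2) * t ^ (-(1/2:ℝ) - 1)) * ‖y‖ ^ 2) =
        -(t ^ ((1:ℝ)/2) * t ^ (-(1/2:ℝ) - 1) * ‖y‖ ^ 2) by ring, ← Real.rpow_add ht0]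
      norm_num
    rw [this, Real.rpow_neg_one]
    have hy : ‖y‖ ^ 2 = t - 1 := by rw [ht]; ring
    field_simp [hy]
    linarith
  rw [hmid]
  have had : a ^ d = t ^ (-(d : ℝ)/2) := by
    rw [ha, ← Real.rpow_natCast (t ^ (-(1/2 : ℝ))) d, ← Real.rpow_mul ht0.le]
    ring_nf
  rw [had, ← Real.rpow_neg_one t, ← Real.rpow_add ht0]
  rw [show (-(d : ℝ)/2 + -1) = -((d : ℝ)/2 + 1) by ring]
  exact abs_of_pos (Real.rpow_pos_of_pos ht0 _)
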